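/- Let d ≥ 1 and let f ∈ ℤ[X] be a monic polynomial with natDegree f = d. For p ∈ ℤ[X] write ‖p‖ for the maximum of the absolute values of its coefficients (the infinity norm). Let δ, A, B be nonnegative integers, and suppose δ satisfies the expansion-factor property: for all a, b ∈ ℤ[X] with natDegree a < d and natDegree b < d, ‖(a·b) modByMonic f‖ ≤ δ·‖a‖·‖b‖. Let n ≥ 1, and for each u in Fin n let s_u, e_u, u_u, e0_u, e1_u, e2_u, α_u ∈ ℤ[X] all have natDegree < d, with ‖α_u‖ ≤ A, ‖e_u‖ ≤ B, ‖e0_u‖ ≤ B, ‖e1_u‖ ≤ B, ‖e2_u‖ ≤ B, ‖s_u‖ ≤ 1, and ‖u_u‖ ≤ 1. Writing a ⊛ b := (a·b) modByMonic f for the ring multiplication of R = ℤ[X]/(f), define NS := Σ_u (α_u ⊛ e1_u) + (Σ_u (α_u ⊛ e0_u)) ⊛ (Σ_u s_u) + Σ_u e2_u - (Σ_u (α_u ⊛ u_u)) ⊛ (Σ_u e_u). Then ‖NS‖ ≤ n·B·(1 + δ·A·(1 + 2·δ·n)). -/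

import Mathlib

open Polynomial

/-- The infinity norm of an integer polynomial: the maximum of the absolute
values of its coefficients. -/
noncomputable def infNorm (p : Polynomial ℤ) : ℕ :=
  p.support.sup fun i => (p.coeff i).natAbs

lemma infNorm_coeff_le (p : Polynomial ℤ) (i : ℕ) :
    (p.coeff i).natAbs ≤ infNorm p := by
  by_cases h : i ∈ p.support
  · exact Finset.le_sup (f := fun i => (p.coeff i).natAbs) h
  · simp [Polynomial.notMem_support_iff.mp h]

lemma infNorm_le_of_coeff (p : Polynomial ℤ) (N : ℕ)
    (h : ∀ i, (p.coeff i).natAbs ≤ N) : infNorm p ≤ N :=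
  Finset.sup_le fun i _ => h i

lemma natAbs_sum_le {ι : Type*} (s : Finset ι) (g : ι → ℤ) :
    (∑ i ∈ s, g i).natAbs ≤ ∑ i ∈ s, (g i).natAbs := by
  classical
  induction s using Finset.induction with
  | empty => simp
  | insert a s h ih =>
    rw [Finset.sum_insert h, Finset.sum_insert h]
    exact le_trans (Int.natAbs_add_le _ _) (by gcongr)

lemma infNorm_sum_le {n : ℕ} (p : Fin n → Polynomial ℤ) (C : ℕ)
    (h : ∀ u, infNorm (p u) ≤ C) : infNorm (∑ u, p u) ≤ n * C := by
  apply infNorm_le_of_coeff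
  intro i
  rw [Polynomial.finset_sum_coeff]
  calc (∑ u, (p u).coeff i).natAbs ≤ ∑ u, ((p u).coeff i).natAbs :=
        natAbs_sum_le _ _
    _ ≤ ∑ _u : Fin n, C :=
        Finset.sum_le_sum fun u _ => le_trans (infNorm_coeff_le _ _) (h u)
    _ = n * C := by simp [mul_comm]

lemma natDegree_sum_lt {n d : ℕ} (hd : 1 ≤ d) (p : Fin n → Polynomial ℤ)
    (h : ∀ u, (p u).natDegree < d) : (∑ u, p u).natDegree < d := by
  have : (∑ u, p u).natDegree ≤ d - 1 :=
    Polynomial.natDegree_sum_le_of_forall_le _ _ fun u _ =>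
      Nat.le_pred_of_lt (h u)
  omega

theorem stmt7 (d : ℕ) (hd : 1 ≤ d) (f : Polynomial ℤ) (hf : f.Monic)
    (hfd : f.natDegree = d) (δ A B : ℕ)
    (hδ : ∀ a b : Polynomial ℤ, a.natDegree < d → b.natDegree < d →
      infNorm ((a * b) %ₘ f) ≤ δ * infNorm a * infNorm b)
    (n : ℕ) (hn : 1 ≤ n)
    (s e uu e0 e1 e2 α : Fin n → Polynomial ℤ)
    (hsdeg : ∀ u, (s u).natDegree < d) (hedeg : ∀ u, (e u).natDegree < d)
    (huudeg : ∀ u, (uu u).natDegree < d) (he0deg : ∀ u, (e0 u).natDegree < d)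
    (he1deg : ∀ u, (e1 u).natDegree < d) (he2deg : ∀ u, (e2 u).natDegree < d)
    (hαdeg : ∀ u, (α u).natDegree < d)
    (hα : ∀ u, infNorm (α u) ≤ A)
    (he : ∀ u, infNorm (e u) ≤ B) (he0 : ∀ u, infNorm (e0 u) ≤ B)
    (he1 : ∀ u, infNorm (e1 u) ≤ B) (he2 : ∀ u, infNorm (e2 u) ≤ B)
    (hs : ∀ u, infNorm (s u) ≤ 1) (huu : ∀ u, infNorm (uu u) ≤ 1)
    (NS : Polynomial ℤ)
    (hNS : NS = (∑ u, (α u * e1 u) %ₘ f)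
      + ((∑ u, (α u * e0 u) %ₘ f) * (∑ u, s u)) %ₘ f
      + (∑ u, e2 u)
      - ((∑ u, (α u * uu u) %ₘ f) * (∑ u, e u)) %ₘ f) :
    infNorm NS ≤ n * B * (1 + δ * A * (1 + 2 * δ * n)) := by
  have hf1 : f ≠ 1 := by
    intro h; rw [h] at hfd; simp at hfd; omega
  have hmod : ∀ p : Polynomial ℤ, (p %ₘ f).natDegree < d := by
    intro p
    rcases eq_or_ne p 0 with h | h
    · simp [h]; omega
    · have := Polynomial.natDegree_modByMonic_lt p hf hf1
      omega
  -- bounds on individual products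
  have hT1 : infNorm (∑ u, (α u * e1 u) %ₘ f) ≤ n * (δ * A * B) := by
    apply infNorm_sum_le
    intro u
    calc infNorm ((α u * e1 u) %ₘ f) ≤ δ * infNorm (α u) * infNorm (e1 u) :=
          hδ _ _ (hαdeg u) (he1deg u)
      _ ≤ δ * A * B := by
          exact Nat.mul_le_mul (Nat.mul_le_mul le_rfl (hα u)) (he1 u)
  have hT2a : infNorm (∑ u, (α u * e0 u) %ₘ f) ≤ n * (δ * A * B) := by
    apply infNorm_sum_le
    intro u
    calc infNorm ((α u * e0 u) %ₘ f) ≤ δ * infNorm (α u) * infNorm (e0 u) :=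
          hδ _ _ (hαdeg u) (he0deg u)
      _ ≤ δ * A * B := Nat.mul_le_mul (Nat.mul_le_mul le_rfl (hα u)) (he0 u)
  have hT2b : infNorm (∑ u, s u) ≤ n * 1 := infNorm_sum_le _ _ hs
  have hT2 : infNorm (((∑ u, (α u * e0 u) %ₘ f) * (∑ u, s u)) %ₘ f)
      ≤ δ * (n * (δ * A * B)) * (n * 1) := by
    calc infNorm (((∑ u, (α u * e0 u) %ₘ f) * (∑ u, s u)) %ₘ f)
        ≤ δ * infNorm (∑ u, (α u * e0 u) %ₘ f) * infNorm (∑ u, s u) :=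
          hδ _ _ (natDegree_sum_lt hd _ fun u => hmod _)
            (natDegree_sum_lt hd _ hsdeg)
      _ ≤ δ * (n * (δ * A * B)) * (n * 1) :=
          Nat.mul_le_mul (Nat.mul_le_mul le_rfl hT2a) hT2b
  have hT3 : infNorm (∑ u, e2 u) ≤ n * B := infNorm_sum_le _ _ he2
  have hT4a : infNorm (∑ u, (α u * uu u) %ₘ f) ≤ n * (δ * A * 1) := by
    apply infNorm_sum_le
    intro u
    calc infNorm ((α u * uu u) %ₘ f) ≤ δ * infNorm (α u) * infNorm (uu u) :=
          hδ _ _ (hαdeg u) (huudeg u)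
      _ ≤ δ * A * 1 := Nat.mul_le_mul (Nat.mul_le_mul le_rfl (hα u)) (huu u)
  have hT4b : infNorm (∑ u, e u) ≤ n * B := infNorm_sum_le _ _ he
  have hT4 : infNorm (((∑ u, (α u * uu u) %ₘ f) * (∑ u, e u)) %ₘ f)
      ≤ δ * (n * (δ * A * 1)) * (n * B) := by
    calc infNorm (((∑ u, (α u * uu u) %ₘ f) * (∑ u, e u)) %ₘ f)
        ≤ δ * infNorm (∑ u, (α u * uu u) %ₘ f) * infNorm (∑ u, e u) :=
          hδ _ _ (natDegree_sum_lt hd _ fun u => hmod _)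
            (natDegree_sum_lt hd _ hedeg)
      _ ≤ δ * (n * (δ * A * 1)) * (n * B) :=
          Nat.mul_le_mul (Nat.mul_le_mul le_rfl hT4a) hT4b
  -- combine coefficientwise
  have hcoeff : ∀ i, (NS.coeff i).natAbs ≤
      n * (δ * A * B) + δ * (n * (δ * A * B)) * (n * 1) + n * B
        + δ * (n * (δ * A * 1)) * (n * B) := by
    intro i
    rw [hNS]
    simp only [Polynomial.coeff_add, Polynomial.coeff_sub]
    calc ((∑ u, (α u * e1 u) %ₘ f).coeff i
          + (((∑ u, (α u * e0 u) %ₘ f) * (∑ u, s u)) %ₘ f).coeff i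
          + (∑ u, e2 u).coeff i
          - ((((∑ u, (α u * uu u) %ₘ f) * (∑ u, e u)) %ₘ f)).coeff i).natAbs
        ≤ ((∑ u, (α u * e1 u) %ₘ f).coeff i).natAbs
          + ((((∑ u, (α u * e0 u) %ₘ f) * (∑ u, s u)) %ₘ f).coeff i).natAbs
          + ((∑ u, e2 u).coeff i).natAbs
          + (((((∑ u, (α u * uu u) %ₘ f) * (∑ u, e u)) %ₘ f)).coeff i).natAbs := by
          refine le_trans (Int.natAbs_sub_le _ _) ?_
          gcongr
          exact le_trans (Int.natAbs_add_le _ _)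
            (by gcongr <;> exact Int.natAbs_add_le _ _)
      _ ≤ n * (δ * A * B) + δ * (n * (δ * A * B)) * (n * 1) + n * B
          + δ * (n * (δ * A * 1)) * (n * B) := by
          gcongr <;>
            first
            | exact le_trans (infNorm_coeff_le _ _) hT1
            | exact le_trans (infNorm_coeff_le _ _) hT2
            | exact le_trans (infNorm_coeff_le _ _) hT3
            | exact le_trans (infNorm_coeff_le _ _) hT4
  have := infNorm_le_of_coeff NS _ hcoeff
  calc infNorm NS ≤ n * (δ * A * B) + δ * (n * (δ * A * B)) * (n * 1) + n * B
        + δ * (n * (δ * A * 1)) * (n * B) := this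
    _ = n * B * (1 + δ * A * (1 + 2 * δ * n)) := by ring
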